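/- Let X be a set and K : X × X → ℂ a bounded function satisfying condition (A1). Then the following are equivalent: (i) K satisfies condition (A4); (ii) for every n, all pairwise distinct x₁, …, xₙ ∈ X, every y ∈ ℂⁿ, and every c ∈ ℓ¹(X) with Φ(c)(x_i) = y_i for all i ∈ {1, …, n}, one has ‖c‖_{ℓ¹(X)} ≥ ‖(K[x])^{-1} y‖₁. -/

import Mathlib

open Matrix

/-- The kernel matrix `K[x]`, with `(j,k)` entry `K(x_k, x_j)`. -/
noncomputable def kernelMatrix {X : Type*} (K : X → X → ℂ) {n : ℕ} (x : Fin n → X) :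
    Matrix (Fin n) (Fin n) ℂ := Matrix.of fun j k => K (x k) (x j)

/-- The vector `K_x(t)`, with `j`-th entry `K(t, x_j)`. -/
noncomputable def kernelVec {X : Type*} (K : X → X → ℂ) {n : ℕ} (x : Fin n → X) (t : X) :
    Fin n → ℂ := fun j => K t (x j)

/-- The `ℓ¹` norm of a vector in `ℂⁿ`. -/
noncomputable def l1norm {n : ℕ} (v : Fin n → ℂ) : ℝ := ∑ j, ‖v j‖

/-- Condition (A1): every kernel matrix at finitely many pairwise distinct points is
nonsingular. -/
def CondA1 {X : Type*} (K : X → X → ℂ) : Prop :=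
  ∀ (n : ℕ) (x : Fin n → X), Function.Injective x → IsUnit (kernelMatrix K x).det

/-- Condition (A4): for all pairwise distinct `x₁, …, x_{n+1}`,
`‖K[x]⁻¹ K_x(x_{n+1})‖₁ ≤ 1`, where `K[x]`, `K_x` are taken at `x₁, …, xₙ`. -/
def CondA4 {X : Type*} (K : X → X → ℂ) : Prop :=
  ∀ (n : ℕ) (x : Fin (n + 1) → X), Function.Injective x →
    l1norm ((kernelMatrix K (fun i : Fin n => x i.castSucc))⁻¹ *ᵥ
      kernelVec K (fun i : Fin n => x i.castSucc) (x (Fin.last n))) ≤ 1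

/-- `Φ(c)(x) = ∑_{t ∈ X} c_t K(t, x)` for `c ∈ ℓ¹(X)`. -/
noncomputable def PhiMap {X : Type*} (K : X → X → ℂ) (c : X → ℂ) (x : X) : ℂ :=
  ∑' t, c t * K t x

lemma key_bound {X : Type*} (K : X → X → ℂ) (hA1 : CondA1 K) (hA4 : CondA4 K)
    {n : ℕ} (x : Fin n → X) (hx : Function.Injective x) (t : X) :
    l1norm ((kernelMatrix K x)⁻¹ *ᵥ kernelVec K x t) ≤ 1 := by
  classical
  by_cases ht : ∃ i, x i = t
  · obtain ⟨i, rfl⟩ := ht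
    have hdet : IsUnit (kernelMatrix K x).det := hA1 n x hx
    have hvec : kernelVec K x (x i) = kernelMatrix K x *ᵥ Pi.single i 1 := by
      funext j
      simp [kernelVec, kernelMatrix, Matrix.mulVec, dotProduct, Pi.single_apply,
        mul_ite, Finset.sum_ite_eq']
    rw [hvec, Matrix.mulVec_mulVec, Matrix.nonsing_inv_mul _ hdet, Matrix.one_mulVec]
    simp [l1norm, Pi.single_apply, apply_ite (norm : ℂ → ℝ), Finset.sum_ite_eq']
  · push_neg at ht
    set x' : Fin (n + 1) → X := Fin.snoc x t with hx'def
    have hinj : Function.Injective x' := by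
      intro a b hab
      induction a using Fin.lastCases with
      | last =>
        induction b using Fin.lastCases with
        | last => rfl
        | cast j => exact absurd (by simpa [x'] using hab.symm) (ht j)
      | cast i =>
        induction b using Fin.lastCases with
        | last => exact absurd (by simpa [x'] using hab) (ht i)
        | cast j => exact congrArg Fin.castSucc (hx (by simpa [x'] using hab))
    have h := hA4 n x' hinj
    have h1 : (fun i : Fin n => x' i.castSucc) = x := by
      funext i; simp [x']
    have h2 : x' (Fin.last n) = t := by simp [x']
    rwa [h1, h2] at h

theorem stmt_6 {X : Type*} (K : X → X → ℂ) (M : ℝ)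
    (hK : ∀ s t, ‖K s t‖ ≤ M) (hA1 : CondA1 K) :
    CondA4 K ↔
      ∀ (n : ℕ) (x : Fin n → X), Function.Injective x → ∀ y : Fin n → ℂ,
        ∀ c : X → ℂ, Summable (fun t => ‖c t‖) →
          (∀ i, PhiMap K c (x i) = y i) →
          l1norm ((kernelMatrix K x)⁻¹ *ᵥ y) ≤ ∑' t, ‖c t‖ := by
  classical
  constructor
  · intro hA4 n x hx y c hc hΦ
    set M' : ℝ := max M 0 with hM'def
    have hM0 : (0 : ℝ) ≤ M' := le_max_right _ _
    have hK' : ∀ s t, ‖K s t‖ ≤ M' := fun s t => (hK s t).trans (le_max_left _ _)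
    set A := (kernelMatrix K x)⁻¹ with hAdef
    set g : X → Fin n → ℂ := fun t => A *ᵥ kernelVec K x t with hgdef0
    have hgdef : ∀ t j, g t j = ∑ k, A j k * K t (x k) := by
      intro t j; simp [hgdef0, Matrix.mulVec, dotProduct, kernelVec]
    have hgb : ∀ t, l1norm (g t) ≤ 1 := fun t => key_bound K hA1 hA4 x hx t
    have hsum1 : ∀ s : X, Summable fun t => c t * K t s := by
      intro s
      refine Summable.of_norm_bounded (hc.mul_right M') ?_
      intro t
      rw [norm_mul]
      exact mul_le_mul_of_nonneg_left (hK' t s) (norm_nonneg _)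
    have hgbd : ∀ t j, ‖g t j‖ ≤ ∑ k, ‖A j k‖ * M' := by
      intro t j
      rw [hgdef]
      refine (norm_sum_le _ _).trans (Finset.sum_le_sum fun k _ => ?_)
      rw [norm_mul]
      exact mul_le_mul_of_nonneg_left (hK' t (x k)) (norm_nonneg _)
    have hs2 : ∀ j, Summable fun t => ‖c t * g t j‖ := by
      intro j
      refine Summable.of_nonneg_of_le (fun t => norm_nonneg _) (fun t => ?_)
        (hc.mul_right (∑ k, ‖A j k‖ * M'))
      rw [norm_mul]
      exact mul_le_mul_of_nonneg_left (hgbd t j) (norm_nonneg _)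
    have hrep : ∀ j, (A *ᵥ y) j = ∑' t, c t * g t j := by
      intro j
      have h1 : (A *ᵥ y) j = ∑ k, A j k * y k := by
        simp [Matrix.mulVec, dotProduct]
      rw [h1]
      have h2 : ∀ k : Fin n, A j k * y k = ∑' t, A j k * (c t * K t (x k)) := by
        intro k
        rw [tsum_mul_left, ← hΦ k]
        rfl
      calc ∑ k, A j k * y k
          = ∑ k, ∑' t, A j k * (c t * K t (x k)) := Finset.sum_congr rfl fun k _ => h2 k
        _ = ∑' t, ∑ k, A j k * (c t * K t (x k)) :=
            (Summable.tsum_finsetSum fun k _ => (hsum1 (x k)).mul_left _).symm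
        _ = ∑' t, c t * g t j := by
            refine tsum_congr fun t => ?_
            rw [hgdef, Finset.mul_sum]
            exact Finset.sum_congr rfl fun k _ => by ring
    have hsumrow : Summable fun t => ∑ j, ‖c t * g t j‖ :=
      summable_sum fun j _ => hs2 j
    calc l1norm (A *ᵥ y)
        = ∑ j, ‖∑' t, c t * g t j‖ :=
          Finset.sum_congr rfl fun j _ => by rw [hrep j]
      _ ≤ ∑ j, ∑' t, ‖c t * g t j‖ := by
          refine Finset.sum_le_sum fun j _ => ?_
          simpa using
            norm_tsum_le_tsum_norm (f := fun t => c t * g t j)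
              (by simpa using hs2 j)
      _ = ∑' t, ∑ j, ‖c t * g t j‖ := (Summable.tsum_finsetSum fun j _ => hs2 j).symm
      _ ≤ ∑' t, ‖c t‖ := by
          refine Summable.tsum_le_tsum (fun t => ?_) hsumrow hc
          have heq : ∑ j, ‖c t * g t j‖ = ‖c t‖ * l1norm (g t) := by
            rw [l1norm, Finset.mul_sum]
            exact Finset.sum_congr rfl fun j _ => by rw [norm_mul]
          rw [heq]
          calc ‖c t‖ * l1norm (g t) ≤ ‖c t‖ * 1 :=
                mul_le_mul_of_nonneg_left (hgb t) (norm_nonneg _)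
            _ = ‖c t‖ := mul_one _
  · intro hI n x hx
    set x' : Fin n → X := fun i => x i.castSucc with hx'def
    have hx'inj : Function.Injective x' := fun a b hab =>
      Fin.castSucc_injective n (hx hab)
    set t := x (Fin.last n) with htdef
    set c : X → ℂ := fun s => if s = t then 1 else 0 with hcdef
    have hcabs : (fun s => ‖c s‖) = fun s => if s = t then 1 else 0 := by
      funext s; by_cases h : s = t <;> simp [hcdef, h]
    have hcsum : Summable fun s => ‖c s‖ := by
      rw [hcabs]; exact (hasSum_ite_eq t (1 : ℝ)).summable
    have hΦ : ∀ i, PhiMap K c (x' i) = kernelVec K x' t i := by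
      intro i
      have hpt : ∀ s, c s * K s (x' i) = if s = t then K t (x' i) else 0 := by
        intro s; by_cases h : s = t <;> simp [hcdef, h]
      show (∑' s, c s * K s (x' i)) = K t (x' i)
      rw [tsum_congr hpt, tsum_ite_eq]
    have h := hI n x' hx'inj (kernelVec K x' t) c hcsum hΦ
    have htsum : ∑' s, ‖c s‖ = 1 := by
      rw [hcabs]; exact tsum_ite_eq t 1
    rw [htsum] at h
    exact h
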